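/- (Laplace-domain boundary condition.) Let k_f, k_b, k_d ≥ 0, s > 0, r0 > 1, and set x = √(s + k_d). Define q = [ (4π·x − 4π − k_f·s/(s + k_b)) / (4π·x + 4π + k_f·s/(s + k_b)) ] · exp(−x·(r0 − 2)) / (8π·r0·x), and for 0 < r ≤ r0 define P̄(r) = exp(−x·(r0 − r))/(8π·r·r0·x) + (q/r)·exp(−x·r). Then P̄ satisfies the radiation boundary condition dP̄/dr(1) = ( k_f·s / (4π·(s + k_b)) )·P̄(1). -/

import Mathlib

/-- The constant `q` of the Laplace-domain Green's function (Eq. (62) of the paper), with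
`x = √(s + k_d)`:
`q = [(4π·x − 4π − k_f·s/(s+k_b)) / (4π·x + 4π + k_f·s/(s+k_b))]·exp(−x·(r0−2))/(8π·r0·x)`. -/
noncomputable def qConst (k_f k_b k_d s r0 : ℝ) : ℝ :=
  ((4 * Real.pi * Real.sqrt (s + k_d) - 4 * Real.pi - k_f * s / (s + k_b))
      / (4 * Real.pi * Real.sqrt (s + k_d) + 4 * Real.pi + k_f * s / (s + k_b)))
    * Real.exp (-Real.sqrt (s + k_d) * (r0 - 2)) / (8 * Real.pi * r0 * Real.sqrt (s + k_d))

/-- The Laplace-domain Green's function in the region `0 < r ≤ r0`, with `x = √(s + k_d)`: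
`P̄(r) = exp(−x·(r0 − r))/(8π·r·r0·x) + (q/r)·exp(−x·r)`. -/
noncomputable def laplaceGreenInner (k_f k_b k_d s r0 : ℝ) (r : ℝ) : ℝ :=
  Real.exp (-Real.sqrt (s + k_d) * (r0 - r)) / (8 * Real.pi * r * r0 * Real.sqrt (s + k_d))
    + (qConst k_f k_b k_d s r0 / r) * Real.exp (-Real.sqrt (s + k_d) * r)

/-- (Laplace-domain boundary condition.) For `k_f, k_b, k_d ≥ 0`, `s > 0`, and `r0 > 1`, the
Laplace-domain Green's function `P̄` satisfies the radiation boundary condition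
`dP̄/dr(1) = (k_f·s/(4π·(s+k_b)))·P̄(1)` at the receiver surface. -/
theorem laplaceGreenInner_satisfies_boundary_condition
    (k_f k_b k_d s r0 : ℝ) (hkf : 0 ≤ k_f) (hkb : 0 ≤ k_b) (hkd : 0 ≤ k_d)
    (hs : 0 < s) (hr0 : 1 < r0) :
    deriv (laplaceGreenInner k_f k_b k_d s r0) 1
      = (k_f * s / (4 * Real.pi * (s + k_b))) * laplaceGreenInner k_f k_b k_d s r0 1 := by
  have hsk : 0 < s + k_d := by linarith
  set x := Real.sqrt (s + k_d) with hxdef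
  have hx : 0 < x := Real.sqrt_pos.mpr hsk
  have hπ : 0 < Real.pi := Real.pi_pos
  have hr0' : (0:ℝ) < r0 := by linarith
  set q := qConst k_f k_b k_d s r0 with hq
  -- derivative of the first summand
  have hinner : HasDerivAt (fun r : ℝ => -x * (r0 - r)) x 1 := by
    have h := ((hasDerivAt_const (1:ℝ) r0).sub (hasDerivAt_id 1)).const_mul (-x)
    simpa using h
  have hnum : HasDerivAt (fun r : ℝ => Real.exp (-x * (r0 - r)))
      (Real.exp (-x * (r0 - 1)) * x) 1 := by
    simpa using hinner.exp
  have hden : HasDerivAt (fun r : ℝ => 8 * Real.pi * r * r0 * x)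
      (8 * Real.pi * r0 * x) 1 := by
    have h := (((hasDerivAt_id (1:ℝ)).const_mul (8 * Real.pi)).mul_const r0).mul_const x
    simpa using h
  have h1 : HasDerivAt (fun r : ℝ => Real.exp (-x * (r0 - r)) / (8 * Real.pi * r * r0 * x))
      ((Real.exp (-x * (r0 - 1)) * x * (8 * Real.pi * 1 * r0 * x)
        - Real.exp (-x * (r0 - 1)) * (8 * Real.pi * r0 * x)) / (8 * Real.pi * 1 * r0 * x)^2)
      1 := hnum.div hden (by positivity)
  -- derivative of the second summand
  have hqr : HasDerivAt (fun r : ℝ => q / r) ((0 * 1 - q * 1) / 1 ^ 2) 1 :=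
    (hasDerivAt_const (1:ℝ) q).div (hasDerivAt_id 1) one_ne_zero
  have hexp : HasDerivAt (fun r : ℝ => Real.exp (-x * r)) (Real.exp (-x * 1) * -x) 1 := by
    have h := ((hasDerivAt_id (1:ℝ)).const_mul (-x)).exp
    simpa using h
  have h2 : HasDerivAt (fun r : ℝ => q / r * Real.exp (-x * r))
      ((0 * 1 - q * 1) / 1 ^ 2 * Real.exp (-x * 1) + q / 1 * (Real.exp (-x * 1) * -x)) 1 :=
    hqr.mul hexp
  have hfun : laplaceGreenInner k_f k_b k_d s r0
      = fun r : ℝ => Real.exp (-x * (r0 - r)) / (8 * Real.pi * r * r0 * x)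
          + q / r * Real.exp (-x * r) := rfl
  rw [hfun, (show HasDerivAt (fun r : ℝ => Real.exp (-x * (r0 - r)) / (8 * Real.pi * r * r0 * x)
      + q / r * Real.exp (-x * r)) _ 1 from h1.add h2).deriv, ← hfun]
  -- now the algebraic identity
  have hE : Real.exp (-x * (r0 - 2)) * Real.exp (-x * 1) = Real.exp (-x * (r0 - 1)) := by
    rw [← Real.exp_add]; ring_nf
  have hskb : 0 < s + k_b := by linarith
  have hDen : 4 * Real.pi * x + 4 * Real.pi + k_f * s / (s + k_b) ≠ 0 := by positivity
  simp only [laplaceGreenInner, hq, qConst, ← hxdef]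
  rw [← hE]
  field_simp
  ring
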